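/- Feasible sets are exactly the cliques of the feasibility graph under pairwise IB-representability: if every minimal infeasible subset of J (w.r.t. 𝒮) has cardinality 2, then T ⊆ J is feasible iff T induces a clique in the complement G_𝒮 of the conflict graph. -/
import Mathlib


variable {J : Type*} [Fintype J] [DecidableEq J]

/-- `T` is a feasible set with respect to `𝒮`: `T ⊆ S` for some `S ∈ 𝒮`. -/
def Feasible (𝒮 : Finset (Finset J)) (T : Finset J) : Prop := ∃ S ∈ 𝒮, T ⊆ S

/-- `T` is a minimal infeasible set: it is infeasible and every proper subset is feasible. -/
def MinInfeasible (𝒮 : Finset (Finset J)) (T : Finset J) : Prop :=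
  ¬ Feasible 𝒮 T ∧ ∀ T' ⊂ T, Feasible 𝒮 T'

/-- Under pairwise IB-representability (every minimal infeasible set has cardinality 2),
the feasible sets are exactly the cliques of the complement `G_𝒮` of the conflict
graph: `T` is feasible iff every pair of distinct elements of `T` lies in some `S ∈ 𝒮`. -/

lemma exists_minInfeasible {J : Type*} [Fintype J] [DecidableEq J]
    (𝒮 : Finset (Finset J)) (T : Finset J) (hT : ¬ Feasible 𝒮 T) :
    ∃ M ⊆ T, MinInfeasible 𝒮 M := by
  induction T using Finset.strongInduction with
  | _ T ih =>
    by_cases h : ∀ T' ⊂ T, Feasible 𝒮 T'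
    · exact ⟨T, subset_rfl, hT, h⟩
    · push_neg at h
      obtain ⟨T', hT', hinf⟩ := h
      obtain ⟨M, hM, hmin⟩ := ih T' hT' hinf
      exact ⟨M, hM.trans hT'.subset, hmin⟩

theorem feasible_iff_clique_in_feasibility_graph (𝒮 : Finset (Finset J))
    (hsing : ∀ v : J, Feasible 𝒮 {v})
    (hmin : ∀ M : Finset J, MinInfeasible 𝒮 M → M.card = 2) :
    ∀ T : Finset J,
      Feasible 𝒮 T ↔ ∀ u ∈ T, ∀ v ∈ T, u ≠ v → ∃ S ∈ 𝒮, u ∈ S ∧ v ∈ S := by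
  intro T
  constructor
  · rintro ⟨S, hS, hTS⟩ u hu v hv _
    exact ⟨S, hS, hTS hu, hTS hv⟩
  · intro hpair
    by_contra hT
    obtain ⟨M, hMT, hMmin⟩ := exists_minInfeasible 𝒮 T hT
    have hMinf := hMmin.1
    have hcard := hmin M hMmin
    obtain ⟨u, v, huv, hM⟩ := Finset.card_eq_two.mp hcard
    have hu : u ∈ T := hMT (by simp [hM])
    have hv : v ∈ T := hMT (by simp [hM])
    obtain ⟨S, hS, huS, hvS⟩ := hpair u hu v hv huv
    exact hMinf ⟨S, hS, by simp [hM, Finset.insert_subset_iff, huS, hvS]⟩
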